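/- Let D ⊆ ℝ^d be open, let f : D → ℝ be locally Lipschitz continuous, and suppose f admits an ECL (L, F, G, Φ). If x* ∈ D is non-degenerate and f is (Fréchet) differentiable at x* with derivative zero, then x* is a global minimizer of f on D, i.e., f(x*) ≤ f(x) for all x ∈ D. -/

import Mathlib

open Set Filter Topology

/-- An Extended Convex Lifting (ECL) of a function `f : D → ℝ` with `D ⊆ ℝ^d`. -/
structure ECL (d dξ d₁ d₂ : ℕ) (D : Set (Fin d → ℝ)) (f : (Fin d → ℝ) → ℝ) where
  L : Set ((Fin d → ℝ) × ℝ × (Fin dξ → ℝ))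
  F : Set (ℝ × (Fin d₁ → ℝ))
  G : Set (Fin d₂ → ℝ)
  Φ : ((Fin d → ℝ) × ℝ × (Fin dξ → ℝ)) → (ℝ × (Fin d₁ → ℝ)) × (Fin d₂ → ℝ)
  convex_F : Convex ℝ F
  nonempty_G : G.Nonempty
  maps_Φ : ∀ p ∈ L, Φ p ∈ F ×ˢ G
  injOn_Φ : Set.InjOn Φ L
  surjOn_Φ : F ×ˢ G ⊆ Φ '' L
  inv_C2 : ∃ (U : Set ((ℝ × (Fin d₁ → ℝ)) × (Fin d₂ → ℝ)))
      (Ψ : ((ℝ × (Fin d₁ → ℝ)) × (Fin d₂ → ℝ)) → ((Fin d → ℝ) × ℝ × (Fin dξ → ℝ))),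
      IsOpen U ∧ F ×ˢ G ⊆ U ∧ ContDiffOn ℝ 2 Ψ U ∧ ∀ p ∈ L, Ψ (Φ p) = p
  proj_lower : ∀ x ∈ D, ∀ γ : ℝ, f x < γ → ∃ ξ, (x, γ, ξ) ∈ L
  proj_upper : ∀ x γ ξ, (x, γ, ξ) ∈ L →
      (x, γ) ∈ closure {q : (Fin d → ℝ) × ℝ | q.1 ∈ D ∧ f q.1 ≤ q.2}
  fst_Φ : ∀ p ∈ L, (Φ p).1.1 = p.2.1

/-- **ECL global optimality of non-degenerate stationary points** (Theorem 3.2,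
specialized to differentiable costs): if `D` is open, `f : D → ℝ` is locally
Lipschitz and admits an ECL, and `x* ∈ D` is non-degenerate and differentiable
at `x*` with zero derivative, then `x*` is a global minimizer of `f` on `D`. -/
theorem ecl_stationary_global_min {d dξ d₁ d₂ : ℕ} {D : Set (Fin d → ℝ)}
    {f : (Fin d → ℝ) → ℝ} (hD : IsOpen D)
    (hf : ∀ x ∈ D, ∃ (K : NNReal) (ε : ℝ), 0 < ε ∧
      LipschitzOnWith K f (Metric.ball x ε ∩ D))
    (E : ECL d dξ d₁ d₂ D f)
    {xs : Fin d → ℝ} (hxs : xs ∈ D)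
    (hnd : ∃ ξ, (xs, f xs, ξ) ∈ E.L)
    (hderiv : HasFDerivAt f (0 : (Fin d → ℝ) →L[ℝ] ℝ) xs) :
    ∀ x ∈ D, f xs ≤ f x := by
  intro x hx
  by_contra hlt
  push_neg at hlt
  -- choose γ strictly between f x and f xs
  set γ : ℝ := (f x + f xs) / 2 with hγdef
  have hγ1 : f x < γ := by rw [hγdef]; linarith
  have hγ2 : γ < f xs := by rw [hγdef]; linarith
  obtain ⟨ξ, hξ⟩ := E.proj_lower x hx γ hγ1
  obtain ⟨ξs, hξs⟩ := hnd
  obtain ⟨U, Ψ, hUopen, hFGU, hΨ, hΨΦ⟩ := E.inv_C2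
  set p0 : (Fin d → ℝ) × ℝ × (Fin dξ → ℝ) := (xs, f xs, ξs) with hp0
  set p1 : (Fin d → ℝ) × ℝ × (Fin dξ → ℝ) := (x, γ, ξ) with hp1
  have hq0 : E.Φ p0 ∈ E.F ×ˢ E.G := E.maps_Φ _ hξs
  have hq1 : E.Φ p1 ∈ E.F ×ˢ E.G := E.maps_Φ _ hξ
  set q0 := E.Φ p0 with hq0def
  set q1 := E.Φ p1 with hq1def
  -- the segment in F × G
  set s : ℝ → (ℝ × (Fin d₁ → ℝ)) × (Fin d₂ → ℝ) :=
    fun t => ((1 - t) • q0.1 + t • q1.1, q0.2) with hs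
  have hsF : ∀ t ∈ Icc (0:ℝ) 1, s t ∈ E.F ×ˢ E.G := by
    intro t ht
    refine ⟨E.convex_F hq0.1 hq1.1 (by linarith [ht.2]) ht.1 (by ring), hq0.2⟩
  set c : ℝ → (Fin d → ℝ) × ℝ × (Fin dξ → ℝ) := fun t => Ψ (s t) with hc
  have hcL : ∀ t ∈ Icc (0:ℝ) 1, c t ∈ E.L ∧ E.Φ (c t) = s t := by
    intro t ht
    obtain ⟨p, hpL, hpe⟩ := E.surjOn_Φ (hsF t ht)
    have hcp : c t = p := by rw [hc]; simp only; rw [← hpe, hΨΦ p hpL]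
    rw [hcp, hpe]; exact ⟨hpL, rfl⟩
  have hq0f : q0.1.1 = f xs := E.fst_Φ p0 hξs
  have hq1f : q1.1.1 = γ := E.fst_Φ p1 hξ
  have hγline : ∀ t ∈ Icc (0:ℝ) 1, (c t).2.1 = (1 - t) * f xs + t * γ := by
    intro t ht
    have h2 := E.fst_Φ (c t) (hcL t ht).1
    rw [(hcL t ht).2] at h2
    rw [← h2]
    simp [hs, hq0f, hq1f]
  have hs0 : s 0 = q0 := by simp [hs]
  have hc0 : c 0 = p0 := by
    show Ψ (s 0) = p0
    rw [hs0, hq0def, hΨΦ p0 hξs]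
  -- differentiability of the curve at 0
  have hU0 : q0 ∈ U := hFGU hq0
  have hΨdiff : DifferentiableAt ℝ Ψ q0 :=
    (hΨ.contDiffAt (hUopen.mem_nhds hU0)).differentiableAt (by norm_num)
  have hsdiff : DifferentiableAt ℝ s 0 := by
    apply DifferentiableAt.prodMk
    · exact (((differentiableAt_const (1:ℝ)).sub differentiableAt_id).smul
        (differentiableAt_const _)).add (differentiableAt_fun_id.fun_smul (differentiableAt_const _))
    · exact differentiableAt_const _
  have hcdiff : DifferentiableAt ℝ c 0 := by
    rw [hc]
    exact (hs0 ▸ hΨdiff).comp 0 hsdiff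
  set X : ℝ → (Fin d → ℝ) := fun t => (c t).1 with hX
  have hXdiff : DifferentiableAt ℝ X 0 := hcdiff.fst
  have hX0 : X 0 = xs := by rw [hX]; simp [hc0, hp0]
  have hXd : HasDerivAt X (deriv X 0) 0 := hXdiff.hasDerivAt
  set g : ℝ → ℝ := fun t => f (X t) with hg
  have hgd : HasDerivAt g 0 0 := by
    have h' : HasFDerivAt f (0 : (Fin d → ℝ) →L[ℝ] ℝ) (X 0) := by rw [hX0]; exact hderiv
    have := h'.comp_hasDerivAt 0 hXd
    simp at this; exact this
  have hg0 : g 0 = f xs := by rw [hg]; simp [hX0]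
  -- closure lemma from local Lipschitzness
  have key : ∀ x' ∈ D, ∀ β : ℝ,
      (x', β) ∈ closure {q : (Fin d → ℝ) × ℝ | q.1 ∈ D ∧ f q.1 ≤ q.2} → f x' ≤ β := by
    intro x' hx' β hcl
    obtain ⟨K, ε, hε, hK⟩ := hf x' hx'
    refine le_of_forall_pos_le_add ?_
    intro e he
    set r : ℝ := min (ε / 2) (e / ((K : ℝ) + 2)) with hr
    have hKpos : (0:ℝ) < (K : ℝ) + 2 := by positivity
    have hrpos : 0 < r := lt_min (by linarith) (by positivity)
    obtain ⟨b, hbS, hbd⟩ := Metric.mem_closure_iff.1 hcl r hrpos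
    rw [Prod.dist_eq] at hbd
    have hd1 : dist x' b.1 < r := lt_of_le_of_lt (le_max_left _ _) hbd
    have hd2 : dist β b.2 < r := lt_of_le_of_lt (le_max_right _ _) hbd
    have hb1 : b.1 ∈ Metric.ball x' ε ∩ D := by
      constructor
      · rw [Metric.mem_ball, dist_comm]
        exact lt_of_lt_of_le hd1 (le_trans (min_le_left _ _) (by linarith))
      · exact hbS.1
    have hx'b : x' ∈ Metric.ball x' ε ∩ D := ⟨Metric.mem_ball_self hε, hx'⟩
    have hlip : dist (f x') (f b.1) ≤ (K : ℝ) * dist x' b.1 := hK.dist_le_mul _ hx'b _ hb1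
    have h1 : f x' - f b.1 ≤ (K : ℝ) * dist x' b.1 :=
      le_trans (le_abs_self _) hlip
    have h2 : b.2 ≤ β + r := by
      have hd2' : |β - b.2| < r := by rwa [Real.dist_eq] at hd2
      have := abs_lt.1 hd2'
      linarith [this.1]
    have hre : ((K:ℝ) + 1) * r ≤ e := by
      have h3 : r ≤ e / ((K : ℝ) + 2) := min_le_right _ _
      have h4 : ((K:ℝ) + 1) * r ≤ ((K:ℝ) + 2) * r := by nlinarith [hrpos.le]
      calc ((K:ℝ) + 1) * r ≤ ((K:ℝ) + 2) * r := h4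
        _ ≤ ((K:ℝ) + 2) * (e / ((K : ℝ) + 2)) := by nlinarith
        _ = e := by field_simp
    have hKd : (K : ℝ) * dist x' b.1 ≤ (K : ℝ) * r :=
      mul_le_mul_of_nonneg_left hd1.le K.coe_nonneg
    have := hbS.2
    nlinarith
  -- eventual slope bound
  have hXD : ∀ᶠ t in 𝓝[>] (0:ℝ), X t ∈ D := by
    have hcont : ContinuousAt X 0 := hXdiff.continuousAt
    have hmem : X ⁻¹' D ∈ 𝓝 (0:ℝ) := hcont.preimage_mem_nhds (hD.mem_nhds (hX0 ▸ hxs))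
    exact eventually_nhdsWithin_of_eventually_nhds hmem
  have hIoc : Ioc (0:ℝ) 1 ∈ 𝓝[>] (0:ℝ) := Ioc_mem_nhdsGT_of_mem (by constructor <;> norm_num)
  have hev : ∀ᶠ t in 𝓝[>] (0:ℝ), slope g 0 t ≤ γ - f xs := by
    filter_upwards [hIoc, hXD] with t ht hXtD
    have htIcc : t ∈ Icc (0:ℝ) 1 := ⟨ht.1.le, ht.2⟩
    have hL : ((c t).1, (c t).2.1, (c t).2.2) ∈ E.L := (hcL t htIcc).1
    have hclos := E.proj_upper _ _ _ hL
    have h1 : f (X t) ≤ (c t).2.1 := key (X t) hXtD _ hclos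
    have h2 : (c t).2.1 = (1 - t) * f xs + t * γ := hγline t htIcc
    have h3 : g t - g 0 ≤ t * (γ - f xs) := by
      rw [hg0]
      have : g t = f (X t) := rfl
      rw [this]
      rw [h2] at h1
      linarith
    rw [slope_def_field]
    rw [div_le_iff₀ (by linarith [ht.1] : (0:ℝ) < t - 0)]
    calc g t - g 0 ≤ t * (γ - f xs) := h3
      _ = (γ - f xs) * (t - 0) := by ring
  have hslope : Tendsto (slope g 0) (𝓝[≠] (0:ℝ)) (𝓝 0) :=
    hasDerivAt_iff_tendsto_slope.1 hgd
  have hslope' : Tendsto (slope g 0) (𝓝[>] (0:ℝ)) (𝓝 0) :=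
    hslope.mono_left (nhdsWithin_mono 0 (fun t ht => ne_of_gt ht))
  have hfin : (0:ℝ) ≤ γ - f xs := le_of_tendsto hslope' hev
  linarith
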